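/- Let B = absconv{b_1 e_1, …, b_d e_d} ⊂ ℝ^d (Euclidean norm), b_1 ≥ … ≥ b_d > 0. Then for every t ≥ 0, B_t = {y ∈ B : Σ_{i=1}^d 1_{y_i ≠ 0}/b_i^2 ≤ t^2}; that is, the sets B_t consist exactly of the points of the octahedron whose support I satisfies Σ_{i∈I} b_i^{−2} ≤ t^2. -/

import Mathlib

open Pointwise

/-- The octahedron `absconv{b_1 e_1, …, b_d e_d}` in Euclidean space. -/
noncomputable def octahedron (d : ℕ) (b : Fin d → ℝ) : Set (EuclideanSpace ℝ (Fin d)) :=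
  convexHull ℝ
    ((Set.range fun i => b i • (EuclideanSpace.single i (1:ℝ))) ∪
      -(Set.range fun i => b i • (EuclideanSpace.single i (1:ℝ))))

section Aux

variable {d : ℕ} {b : Fin d → ℝ}

private lemma sum_single_eq (u : EuclideanSpace ℝ (Fin d)) :
    ∑ i, (u i) • EuclideanSpace.single i (1:ℝ) = u := by
  have := (EuclideanSpace.basisFun (Fin d) ℝ).sum_repr u
  simpa [EuclideanSpace.basisFun_apply, EuclideanSpace.basisFun_repr] using this

private lemma vertex_apply (i j : Fin d) :
    (b i • EuclideanSpace.single i (1:ℝ)) j = if j = i then b i else 0 := by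
  simp [EuclideanSpace.single_apply]

private lemma inner_eq (z y : EuclideanSpace ℝ (Fin d)) :
    (inner ℝ z y : ℝ) = ∑ i, z i * y i := by
  simp [PiLp.inner_apply, RCLike.inner_apply, mul_comm]

private lemma norm_sq_eq (z : EuclideanSpace ℝ (Fin d)) : ‖z‖ ^ 2 = ∑ i, z i ^ 2 := by
  rw [EuclideanSpace.norm_eq, Real.sq_sqrt (Finset.sum_nonneg fun i _ => sq_nonneg _)]
  simp [Real.norm_eq_abs, sq_abs]

/-- points of the octahedron have weighted ℓ¹ norm at most 1 -/
private lemma oct_subset (hb : ∀ i, 0 < b i) :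
    octahedron d b ⊆ {x : EuclideanSpace ℝ (Fin d) | ∑ i, |x i| / b i ≤ 1} := by
  apply convexHull_min
  · rintro x (⟨i, rfl⟩ | hx)
    · simp only [Set.mem_setOf_eq]
      have : ∀ j, |(b i • EuclideanSpace.single i (1:ℝ)) j| / b j
          = if j = i then 1 else 0 := by
        intro j
        rw [vertex_apply]
        split <;> rename_i h
        · subst h; rw [abs_of_pos (hb j), div_self (hb j).ne']
        · simp
      rw [Finset.sum_congr rfl fun j _ => this j]
      simp
    · rw [Set.mem_neg] at hx
      obtain ⟨i, hi⟩ := hx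
      have hi' : b i • EuclideanSpace.single i (1:ℝ) = -x := hi
      have hxi : x = -(b i • EuclideanSpace.single i (1:ℝ)) := by
        rw [hi', neg_neg]
      subst hxi
      simp only [Set.mem_setOf_eq]
      have : ∀ j, |(-(b i • EuclideanSpace.single i (1:ℝ))) j| / b j
          = if j = i then 1 else 0 := by
        intro j
        have : (-(b i • EuclideanSpace.single i (1:ℝ))) j
            = -((b i • EuclideanSpace.single i (1:ℝ)) j) := rfl
        rw [this, abs_neg, vertex_apply]
        split <;> rename_i h
        · subst h; rw [abs_of_pos (hb j), div_self (hb j).ne']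
        · simp
      rw [Finset.sum_congr rfl fun j _ => this j]
      simp
  · intro x hx y hy a c ha hc hac
    simp only [Set.mem_setOf_eq] at hx hy ⊢
    have key : ∀ i, |(a • x + c • y) i| / b i ≤ a * (|x i| / b i) + c * (|y i| / b i) := by
      intro i
      have happ : (a • x + c • y) i = a * x i + c * y i := rfl
      rw [happ]
      have habs : |a * x i + c * y i| ≤ a * |x i| + c * |y i| := by
        calc |a * x i + c * y i| ≤ |a * x i| + |c * y i| := abs_add_le _ _
        _ = a * |x i| + c * |y i| := by rw [abs_mul, abs_mul, abs_of_nonneg ha, abs_of_nonneg hc]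
      calc |a * x i + c * y i| / b i ≤ (a * |x i| + c * |y i|) / b i := by
            gcongr
            exact (hb i).le
        _ = a * (|x i| / b i) + c * (|y i| / b i) := by ring
    calc ∑ i, |(a • x + c • y) i| / b i
        ≤ ∑ i, (a * (|x i| / b i) + c * (|y i| / b i)) := Finset.sum_le_sum fun i _ => key i
      _ = a * (∑ i, |x i| / b i) + c * (∑ i, |y i| / b i) := by
          rw [Finset.sum_add_distrib, Finset.mul_sum, Finset.mul_sum]
      _ ≤ a * 1 + c * 1 := by gcongr
      _ = 1 := by rw [mul_one, mul_one, hac]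

private lemma zero_mem_oct (hd : 0 < d) : (0 : EuclideanSpace ℝ (Fin d)) ∈ octahedron d b := by
  set i0 : Fin d := ⟨0, hd⟩
  set v := b i0 • EuclideanSpace.single i0 (1:ℝ) with hv
  have hv1 : v ∈ octahedron d b := subset_convexHull ℝ _ (Or.inl ⟨i0, rfl⟩)
  have hv2 : -v ∈ octahedron d b := subset_convexHull ℝ _ (Or.inr (Set.neg_mem_neg.2 ⟨i0, rfl⟩))
  have := (convex_convexHull ℝ _) hv1 hv2 (by norm_num : (0:ℝ) ≤ 1/2)
      (by norm_num : (0:ℝ) ≤ 1/2) (by norm_num)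
  have heq : (1/2 : ℝ) • v + (1/2 : ℝ) • (-v) = 0 := by
    rw [smul_neg, add_neg_cancel]
  rwa [heq] at this

private lemma mem_oct (hd : 0 < d) (hb : ∀ i, 0 < b i) {x : EuclideanSpace ℝ (Fin d)}
    (hx : ∑ i, |x i| / b i ≤ 1) : x ∈ octahedron d b := by
  classical
  set S := ∑ i, |x i| / b i with hS
  have hS0 : 0 ≤ S := Finset.sum_nonneg fun i _ => div_nonneg (abs_nonneg _) (hb i).le
  rcases eq_or_lt_of_le hS0 with h0 | hpos
  · -- S = 0 so x = 0
    have hall : ∀ i ∈ Finset.univ, |x i| / b i = 0 :=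
      (Finset.sum_eq_zero_iff_of_nonneg fun i _ => div_nonneg (abs_nonneg _) (hb i).le).1 h0.symm
    have hx0 : x = 0 := by
      ext i
      have := hall i (Finset.mem_univ i)
      have : |x i| = 0 := by
        by_contra h
        exact h (by
          have := div_eq_zero_iff.1 this
          rcases this with h' | h'
          · exact h'
          · exact absurd h' (hb i).ne')
      simpa [abs_eq_zero] using this
    rw [hx0]
    exact zero_mem_oct hd
  · set u : EuclideanSpace ℝ (Fin d) := S⁻¹ • x with hu
    have hui : ∀ i, u i = S⁻¹ * x i := fun i => rfl
    have humem : u ∈ octahedron d b := by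
      have hsum : ∑ i, |u i| / b i = 1 := by
        have : ∀ i, |u i| / b i = S⁻¹ * (|x i| / b i) := by
          intro i
          rw [hui, abs_mul, abs_of_pos (inv_pos.2 hpos)]; ring
        rw [Finset.sum_congr rfl fun i _ => this i, ← Finset.mul_sum, ← hS,
          inv_mul_cancel₀ hpos.ne']
      set p : Fin d → EuclideanSpace ℝ (Fin d) := fun i =>
        if 0 ≤ x i then b i • EuclideanSpace.single i (1:ℝ)
        else -(b i • EuclideanSpace.single i (1:ℝ)) with hp
      have hpmem : ∀ i, p i ∈ octahedron d b := by
        intro i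
        by_cases hxi : 0 ≤ x i
        · simp only [hp, if_pos hxi]
          exact subset_convexHull ℝ _ (Or.inl ⟨i, rfl⟩)
        · simp only [hp, if_neg hxi]
          exact subset_convexHull ℝ _ (Or.inr (Set.neg_mem_neg.2 ⟨i, rfl⟩))
      have hcomb : ∑ i, (|u i| / b i) • p i = u := by
        have hterm : ∀ i, (|u i| / b i) • p i = (u i) • EuclideanSpace.single i (1:ℝ) := by
          intro i
          by_cases hxi : 0 ≤ x i
          · simp only [hp]
            rw [if_pos hxi, smul_smul, div_mul_cancel₀ _ (hb i).ne',
              abs_of_nonneg (by rw [hui]; positivity)]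
          · simp only [hp]
            rw [if_neg hxi, smul_neg, smul_smul, div_mul_cancel₀ _ (hb i).ne', ← neg_smul,
              abs_of_neg, neg_neg]
            rw [hui]
            have : x i < 0 := lt_of_not_ge hxi
            exact mul_neg_of_pos_of_neg (inv_pos.2 hpos) this
        rw [Finset.sum_congr rfl fun i _ => hterm i]
        exact sum_single_eq u
      rw [← hcomb]
      exact (convex_convexHull ℝ _).sum_mem
        (fun i _ => div_nonneg (abs_nonneg _) (hb i).le)
        (by rw [hsum]) (fun i _ => hpmem i)
    have : S • u = x := by
      rw [hu, smul_smul, mul_inv_cancel₀ hpos.ne', one_smul]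
    rw [← this]
    exact (convex_convexHull ℝ _).smul_mem_of_zero_mem (zero_mem_oct hd) humem
      ⟨hS0, hx⟩

private lemma gauge_oct (hd : 0 < d) (hb : ∀ i, 0 < b i) (y : EuclideanSpace ℝ (Fin d)) :
    gauge (octahedron d b) y = ∑ i, |y i| / b i := by
  classical
  set S := ∑ i, |y i| / b i with hS
  have hS0 : 0 ≤ S := Finset.sum_nonneg fun i _ => div_nonneg (abs_nonneg _) (hb i).le
  have hmem_smul : ∀ r : ℝ, S < r → y ∈ r • octahedron d b := by
    intro r hr
    have hrpos : 0 < r := lt_of_le_of_lt hS0 hr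
    refine Set.mem_smul_set.2 ⟨r⁻¹ • y, ?_, by rw [smul_smul, mul_inv_cancel₀ hrpos.ne', one_smul]⟩
    apply mem_oct hd hb
    have : ∀ i, |(r⁻¹ • y) i| / b i = r⁻¹ * (|y i| / b i) := by
      intro i
      have : (r⁻¹ • y) i = r⁻¹ * y i := rfl
      rw [this, abs_mul, abs_of_pos (inv_pos.2 hrpos)]; ring
    rw [Finset.sum_congr rfl fun i _ => this i, ← Finset.mul_sum, ← hS]
    rw [inv_mul_le_iff₀ hrpos, mul_one]
    exact hr.le
  apply le_antisymm
  · -- gauge ≤ S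
    rcases eq_or_lt_of_le hS0 with h0 | hpos
    · -- S = 0: every r > 0 works, so gauge ≤ every positive r hence ≤ 0 = S
      have hle : ∀ r : ℝ, 0 < r → gauge (octahedron d b) y ≤ r := by
        intro r hr
        exact gauge_le_of_mem hr.le (hmem_smul r (by rw [← h0]; exact hr))
      rw [← h0]
      by_contra h
      push_neg at h
      have := hle (gauge (octahedron d b) y / 2) (by linarith)
      linarith
    · -- 0 < S : y ∈ S • oct
      apply gauge_le_of_mem hS0
      refine Set.mem_smul_set.2 ⟨S⁻¹ • y, ?_, by rw [smul_smul, mul_inv_cancel₀ hpos.ne', one_smul]⟩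
      apply mem_oct hd hb
      have : ∀ i, |(S⁻¹ • y) i| / b i = S⁻¹ * (|y i| / b i) := by
        intro i
        have : (S⁻¹ • y) i = S⁻¹ * y i := rfl
        rw [this, abs_mul, abs_of_pos (inv_pos.2 hpos)]; ring
      rw [Finset.sum_congr rfl fun i _ => this i, ← Finset.mul_sum, ← hS,
        inv_mul_cancel₀ hpos.ne']
  · -- S ≤ gauge
    rw [gauge_def]
    apply le_csInf
    · exact ⟨S + 1, ⟨by simp only [Set.mem_Ioi]; linarith, hmem_smul _ (by linarith)⟩⟩
    · rintro r ⟨hr, hyr⟩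
      rw [Set.mem_Ioi] at hr
      obtain ⟨v, hv, rfl⟩ := Set.mem_smul_set.1 hyr
      have hvle := oct_subset hb hv
      simp only [Set.mem_setOf_eq] at hvle
      have : ∀ i, |(r • v) i| / b i = r * (|v i| / b i) := by
        intro i
        have : (r • v) i = r * v i := rfl
        rw [this, abs_mul, abs_of_pos hr]; ring
      rw [hS, Finset.sum_congr rfl fun i _ => this i, ← Finset.mul_sum]
      calc r * ∑ i, |v i| / b i ≤ r * 1 := by gcongr
        _ = r := mul_one r
end Aux

/-- For the octahedron `B = absconv{b_i e_i}` with `b_1 ≥ … ≥ b_d > 0` in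
Euclidean space, for every `t ≥ 0` one has
`B_t = {y ∈ B : Σ_i 1_{y_i ≠ 0}/b_i² ≤ t²}`. -/
theorem stmt16 (d : ℕ) (b : Fin d → ℝ) (hb : ∀ i, 0 < b i)
    (hmono : ∀ i j : Fin d, i ≤ j → b j ≤ b i) (t : ℝ) (ht : 0 ≤ t) :
    {y ∈ octahedron d b | ∃ z : EuclideanSpace ℝ (Fin d),
        (inner ℝ z y : ℝ) = gauge (octahedron d b) y ∧
        (∀ x ∈ octahedron d b, (inner ℝ z x : ℝ) ≤ 1) ∧ ‖z‖ ≤ t}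
      = {y ∈ octahedron d b | ∑ i, (if y i = 0 then 0 else 1 / (b i) ^ 2) ≤ t ^ 2} := by
  classical
  rcases Nat.eq_zero_or_pos d with hd | hd
  · subst hd
    have hoct : octahedron 0 b = ∅ := by
      simp [octahedron]
    ext y
    simp [hoct]
  · ext y
    simp only [Set.mem_setOf_eq]
    constructor
    · rintro ⟨hy, z, hz1, hz2, hz3⟩
      refine ⟨hy, ?_⟩
      have hzb : ∀ i, |z i| ≤ 1 / b i := by
        intro i
        have h1 : (inner ℝ z (b i • EuclideanSpace.single i (1:ℝ)) : ℝ) ≤ 1 :=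
          hz2 _ (subset_convexHull ℝ _ (Or.inl ⟨i, rfl⟩))
        have h2 : (inner ℝ z (-(b i • EuclideanSpace.single i (1:ℝ))) : ℝ) ≤ 1 :=
          hz2 _ (subset_convexHull ℝ _ (Or.inr (Set.neg_mem_neg.2 ⟨i, rfl⟩)))
        have hcomp : (inner ℝ z (b i • EuclideanSpace.single i (1:ℝ)) : ℝ) = z i * b i := by
          rw [inner_eq, Finset.sum_eq_single i]
          · rw [vertex_apply, if_pos rfl]
          · intro j _ hj; rw [vertex_apply, if_neg hj, mul_zero]
          · intro h; exact absurd (Finset.mem_univ i) h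
        rw [hcomp] at h1
        rw [inner_neg_right, hcomp] at h2
        rw [abs_le]
        constructor
        · have : -z i ≤ 1 / b i := by
            rw [le_div_iff₀ (hb i)]
            nlinarith
          linarith
        · rw [le_div_iff₀ (hb i)]
          exact h1
      have hz_prod : ∀ i, z i * y i ≤ |y i| / b i := by
        intro i
        calc z i * y i ≤ |z i * y i| := le_abs_self _
          _ = |z i| * |y i| := abs_mul _ _
          _ ≤ (1 / b i) * |y i| := mul_le_mul_of_nonneg_right (hzb i) (abs_nonneg _)
          _ = |y i| / b i := by ring
      have hsum : ∑ i, z i * y i = ∑ i, |y i| / b i := by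
        rw [← inner_eq, hz1, gauge_oct hd hb]
      have heach := (Finset.sum_eq_sum_iff_of_le fun i _ => hz_prod i).1 hsum
      calc ∑ i, (if y i = 0 then 0 else 1 / (b i) ^ 2)
          ≤ ∑ i, z i ^ 2 := by
            apply Finset.sum_le_sum
            intro i _
            by_cases hyi : y i = 0
            · rw [if_pos hyi]; exact sq_nonneg _
            · rw [if_neg hyi]
              have h := heach i (Finset.mem_univ i)
              have hyne2 : (y i) ^ 2 ≠ 0 := pow_ne_zero 2 hyi
              have hbne : b i ≠ 0 := (hb i).ne'
              have hh : z i ^ 2 * y i ^ 2 = y i ^ 2 / b i ^ 2 := by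
                have : (z i * y i) ^ 2 = (|y i| / b i) ^ 2 := by rw [h]
                rw [mul_pow] at this
                rw [this, div_pow, sq_abs]
              have key : z i ^ 2 * b i ^ 2 = 1 := by
                have h3 : (z i ^ 2 * b i ^ 2) * y i ^ 2 = 1 * y i ^ 2 := by
                  field_simp at hh
                  linear_combination y i ^ 2 * hh
                exact mul_right_cancel₀ hyne2 h3
              have : 1 / (b i) ^ 2 = z i ^ 2 := by
                rw [div_eq_iff (pow_ne_zero 2 hbne)]
                linarith [key]
              rw [this]
        _ = ‖z‖ ^ 2 := (norm_sq_eq z).symm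
        _ ≤ t ^ 2 := by
            have := pow_le_pow_left₀ (norm_nonneg z) hz3 2
            exact this
    · rintro ⟨hy, hsum⟩
      set z : EuclideanSpace ℝ (Fin d) := WithLp.toLp 2 (fun i => if y i = 0 then 0 else |y i| / (y i * b i))
        with hzdef
      have hzi : ∀ i, z i = if y i = 0 then 0 else |y i| / (y i * b i) := fun i => rfl
      have habs : ∀ i, |z i| ≤ 1 / b i := by
        intro i
        rw [hzi]
        by_cases hyi : y i = 0
        · rw [if_pos hyi, abs_zero]
          exact div_nonneg zero_le_one (hb i).le
        · rw [if_neg hyi, abs_div, abs_abs, abs_mul, abs_of_pos (hb i)]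
          rw [div_mul_eq_div_div]
          rw [div_self (abs_ne_zero.2 hyi)]
      have hsq : ∀ i, z i ^ 2 = if y i = 0 then 0 else 1 / (b i) ^ 2 := by
        intro i
        rw [hzi]
        by_cases hyi : y i = 0
        · rw [if_pos hyi, if_pos hyi]; norm_num
        · rw [if_neg hyi, if_neg hyi, div_pow, mul_pow, sq_abs]
          rw [div_mul_eq_div_div, div_self (pow_ne_zero 2 hyi)]
      refine ⟨hy, z, ?_, ?_, ?_⟩
      · rw [inner_eq, gauge_oct hd hb]
        apply Finset.sum_congr rfl
        intro i _
        rw [hzi]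
        by_cases hyi : y i = 0
        · rw [if_pos hyi, hyi]; simp
        · rw [if_neg hyi]
          field_simp [hyi]
      · intro x hx
        have hxle := oct_subset hb hx
        simp only [Set.mem_setOf_eq] at hxle
        rw [inner_eq]
        calc ∑ i, z i * x i ≤ ∑ i, |x i| / b i := by
              apply Finset.sum_le_sum
              intro i _
              calc z i * x i ≤ |z i * x i| := le_abs_self _
                _ = |z i| * |x i| := abs_mul _ _
                _ ≤ (1 / b i) * |x i| := mul_le_mul_of_nonneg_right (habs i) (abs_nonneg _)
                _ = |x i| / b i := by ring
          _ ≤ 1 := hxle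
      · have h2 : ‖z‖ ^ 2 ≤ t ^ 2 := by
          rw [norm_sq_eq, Finset.sum_congr rfl fun i _ => hsq i]
          exact hsum
        calc ‖z‖ = Real.sqrt (‖z‖ ^ 2) := (Real.sqrt_sq (norm_nonneg z)).symm
          _ ≤ Real.sqrt (t ^ 2) := Real.sqrt_le_sqrt h2
          _ = t := Real.sqrt_sq ht
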